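/- Let u, v ∈ ℂ⁵ be linearly independent vectors such that Q₁(su + tv) = 0 and Q₂(su + tv) = 0 for all s, t ∈ ℂ (i.e., the projective line through [u] and [v] lies on the surface Q₁ = Q₂ = 0). Then every vector w in the span of u and v satisfies w₀ = w₂ = w₃ = 0. In other words, the only line contained in the complex surface {Q₁ = Q₂ = 0} ⊂ ℙ⁴ is the line x₀ = x₂ = x₃ = 0. -/
import Mathlib


noncomputable section

/-- The quadratic form `Q₁(x) = x₀x₁ - x₂²` over `ℂ`. -/
def Q1c (x : Fin 5 → ℂ) : ℂ := x 0 * x 1 - (x 2) ^ 2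

/-- The quadratic form `Q₂(x) = x₀x₄ - x₁x₂ + x₃²` over `ℂ`. -/
def Q2c (x : Fin 5 → ℂ) : ℂ := x 0 * x 4 - x 1 * x 2 + (x 3) ^ 2

/-- Key algebraic lemma: if the plane spanned by `a`,`b` satisfies both quadric
conditions and `a₀ ≠ 0`, then all `2×2` minors involving row `0` vanish. -/
lemma aux19 (a0 a1 a2 a3 a4 b0 b1 b2 b3 b4 : ℂ)
    (h1 : a0*a1 - a2^2 = 0) (h2 : b0*b1 - b2^2 = 0)
    (h3 : a0*b1 + a1*b0 - 2*(a2*b2) = 0)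
    (h4 : a0*a4 - a1*a2 + a3^2 = 0) (h5 : b0*b4 - b1*b2 + b3^2 = 0)
    (h6 : a0*b4 + a4*b0 - a1*b2 - a2*b1 + 2*(a3*b3) = 0)
    (h0 : a0 ≠ 0) :
    a0*b1 - a1*b0 = 0 ∧ a0*b2 - a2*b0 = 0 ∧ a0*b3 - a3*b0 = 0 ∧ a0*b4 - a4*b0 = 0 := by
  have mA : a0*b1 - a1*b0 = 0 := by
    have sq : (a0*b1 - a1*b0)^2 = 0 := by
      linear_combination (a0*b1 + a1*b0 + 2*(a2*b2))*h3 - 4*b0*b1*h1 - 4*a2^2*h2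
    exact pow_eq_zero_iff two_ne_zero |>.mp sq
  have mA3 : a1*b0 - a2*b2 = 0 := by linear_combination (h3 - mA)/2
  have mB : a0*b2 - a2*b0 = 0 := by
    rcases eq_or_ne a2 0 with h | h
    · subst h
      have ha1 : a1 = 0 := by
        have : a0 * a1 = 0 := by linear_combination h1
        exact (mul_eq_zero.mp this).resolve_left h0
      have hb1 : b1 = 0 := by
        have : a0 * b1 = 0 := by linear_combination mA + b0 * ha1
        exact (mul_eq_zero.mp this).resolve_left h0
      have hb2 : b2 = 0 := by
        have : b2 ^ 2 = 0 := by linear_combination -h2 + b0 * hb1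
        exact pow_eq_zero_iff two_ne_zero |>.mp this
      linear_combination a0 * hb2
    · have key : a2 * (a0*b2 - a2*b0) = 0 := by
        linear_combination b0*h1 - a0*mA3
      exact (mul_eq_zero.mp key).resolve_left h
  have mC : a0*b3 - a3*b0 = 0 := by
    have sq : (a0*b3 - a3*b0)^2 = 0 := by
      linear_combination a0^2*h5 - a0*b0*h6 + b0^2*h4 + (a0*b2 - a2*b0)*mA
    exact pow_eq_zero_iff two_ne_zero |>.mp sq
  have mD : a0*b4 - a4*b0 = 0 := by
    have key : a0 * (a0*b4 - a4*b0) = 0 := by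
      linear_combination a0*h6 + a1*mB + a2*mA - 2*a3*mC - 2*b0*h4
    exact (mul_eq_zero.mp key).resolve_left h0
  exact ⟨mA, mB, mC, mD⟩

/-- The only line contained in the surface `Q₁ = Q₂ = 0 ⊂ ℙ⁴` is `x₀ = x₂ = x₃ = 0`. -/
theorem stmt19 (u v : Fin 5 → ℂ) (hind : LinearIndependent ℂ ![u, v])
    (hline : ∀ s t : ℂ, Q1c (s • u + t • v) = 0 ∧ Q2c (s • u + t • v) = 0) :
    ∀ w ∈ Submodule.span ℂ ({u, v} : Set (Fin 5 → ℂ)),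
      w 0 = 0 ∧ w 2 = 0 ∧ w 3 = 0 := by
  have h10 := hline 1 0
  have h01 := hline 0 1
  have h11 := hline 1 1
  simp only [Q1c, Q2c, Pi.add_apply, Pi.smul_apply, smul_eq_mul, one_mul, zero_mul,
    zero_add, add_zero] at h10 h01 h11
  obtain ⟨e1, e4⟩ := h10
  obtain ⟨e2, e5⟩ := h01
  obtain ⟨e3', e6'⟩ := h11
  have e3 : u 0 * v 1 + u 1 * v 0 - 2 * (u 2 * v 2) = 0 := by
    linear_combination e3' - e1 - e2
  have e6 : u 0 * v 4 + u 4 * v 0 - u 1 * v 2 - u 2 * v 1 + 2 * (u 3 * v 3) = 0 := by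
    linear_combination e6' - e4 - e5
  rw [LinearIndependent.pair_iff] at hind
  -- u 0 = 0
  have hu0 : u 0 = 0 := by
    by_contra h0
    obtain ⟨p1, p2, p3, p4⟩ := aux19 (u 0) (u 1) (u 2) (u 3) (u 4)
      (v 0) (v 1) (v 2) (v 3) (v 4) e1 e2 e3 e4 e5 e6 h0
    have hv : (v 0) • u + (-(u 0)) • v = 0 := by
      funext i
      simp only [Pi.add_apply, Pi.smul_apply, smul_eq_mul, Pi.zero_apply]
      fin_cases i
      · show v 0 * u 0 + -(u 0) * v 0 = 0; ring
      · show v 0 * u 1 + -(u 0) * v 1 = 0; linear_combination -p1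
      · show v 0 * u 2 + -(u 0) * v 2 = 0; linear_combination -p2
      · show v 0 * u 3 + -(u 0) * v 3 = 0; linear_combination -p3
      · show v 0 * u 4 + -(u 0) * v 4 = 0; linear_combination -p4
    exact h0 (neg_eq_zero.mp (hind _ _ hv).2)
  -- v 0 = 0
  have hv0 : v 0 = 0 := by
    by_contra h0
    obtain ⟨p1, p2, p3, p4⟩ := aux19 (v 0) (v 1) (v 2) (v 3) (v 4)
      (u 0) (u 1) (u 2) (u 3) (u 4) e2 e1 (by linear_combination e3) e5 e4
      (by linear_combination e6) h0
    have hu : (-(v 0)) • u + (u 0) • v = 0 := by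
      funext i
      simp only [Pi.add_apply, Pi.smul_apply, smul_eq_mul, Pi.zero_apply]
      fin_cases i
      · show -(v 0) * u 0 + u 0 * v 0 = 0; ring
      · show -(v 0) * u 1 + u 0 * v 1 = 0; linear_combination -p1
      · show -(v 0) * u 2 + u 0 * v 2 = 0; linear_combination -p2
      · show -(v 0) * u 3 + u 0 * v 3 = 0; linear_combination -p3
      · show -(v 0) * u 4 + u 0 * v 4 = 0; linear_combination -p4
    exact h0 (neg_eq_zero.mp (hind _ _ hu).1)
  have hu2 : u 2 = 0 := by
    have : u 2 ^ 2 = 0 := by linear_combination -e1 + u 1 * hu0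
    exact pow_eq_zero_iff two_ne_zero |>.mp this
  have hv2 : v 2 = 0 := by
    have : v 2 ^ 2 = 0 := by linear_combination -e2 + v 1 * hv0
    exact pow_eq_zero_iff two_ne_zero |>.mp this
  have hu3 : u 3 = 0 := by
    have : u 3 ^ 2 = 0 := by linear_combination e4 - u 4 * hu0 + u 1 * hu2
    exact pow_eq_zero_iff two_ne_zero |>.mp this
  have hv3 : v 3 = 0 := by
    have : v 3 ^ 2 = 0 := by linear_combination e5 - v 4 * hv0 + v 1 * hv2
    exact pow_eq_zero_iff two_ne_zero |>.mp this
  intro w hw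
  rw [Submodule.mem_span_pair] at hw
  obtain ⟨a, b, rfl⟩ := hw
  simp [Pi.add_apply, Pi.smul_apply, hu0, hv0, hu2, hv2, hu3, hv3]

end
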